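/- Let (Ω, Σ, μ) be a probability space and n a positive integer. For j = 1, 2 let a_j : Ω → M_n(ℂ) be Bochner integrable maps and let e_j : Ω → M_n(ℂ) be measurable maps such that for μ-almost every ω, e_j(ω) is a partial isometry and Re tr(e_j(ω) a_j(ω)) = ‖a_j(ω)‖₁, where ‖·‖₁ is the trace norm. For a measurable essentially bounded f : Ω → M_n(ℂ) define N(f)² = Σ_{j=1}^{2} ∫_Ω Re tr( ( f(ω) f(ω)ᴴ e_j(ω) + e_j(ω) f(ω)ᴴ f(ω) ) a_j(ω) / 2 ) dμ(ω). Then the supremum of N(f) over all measurable f : Ω → M_n(ℂ) with ‖f(ω)‖ ≤ 1 (ℓ²-operator norm) for μ-almost every ω is attained: there exists a measurable f₀ with ‖f₀(ω)‖ ≤ 1 μ-almost everywhere such that N(f₀) = sup{ N(f) : f measurable, ‖f(ω)‖ ≤ 1 μ-a.e. }. -/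

import Mathlib

open scoped Matrix.Norms.L2Operator ComplexOrder
open Matrix MeasureTheory

/-- The Borel σ-algebra on `M_n(ℂ)` coming from its (norm) topology. -/
noncomputable instance matrixMeasurableSpace (n : ℕ) : MeasurableSpace (Matrix (Fin n) (Fin n) ℂ) :=
  borel _

instance matrixBorelSpace (n : ℕ) : BorelSpace (Matrix (Fin n) (Fin n) ℂ) := ⟨rfl⟩

/-- The trace norm `‖a‖₁ = tr((aᴴ a)^{1/2})` of a complex matrix. -/
noncomputable def traceNorm {n : ℕ} (a : Matrix (Fin n) (Fin n) ℂ) : ℝ :=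
  (((Matrix.posSemidef_conjTranspose_mul_self a).1.eigenvectorUnitary : Matrix (Fin n) (Fin n) ℂ) *
    diagonal ((fun x : ℝ => (x : ℂ)) ∘ Real.sqrt ∘ (Matrix.posSemidef_conjTranspose_mul_self a).1.eigenvalues) *
    (star (Matrix.posSemidef_conjTranspose_mul_self a).1.eigenvectorUnitary :
      Matrix (Fin n) (Fin n) ℂ)).trace.re

/-- The pre-Hilbert seminorm `N(f) = ‖f‖_{g₁,g₂}` on `L^∞(μ, M_n(ℂ))` associated with the
normal functionals `g_j` represented by the integrable matrix fields `a_j` (with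
norm-attaining partial isometry fields `e_j`):
`N(f)² = Σ_j ∫ Re tr((f fᴴ e_j + e_j fᴴ f) a_j / 2) dμ`. -/
noncomputable def Nseminorm {Ω : Type*} [MeasurableSpace Ω] (μ : Measure Ω) {n : ℕ}
    (a e : Fin 2 → Ω → Matrix (Fin n) (Fin n) ℂ)
    (f : Ω → Matrix (Fin n) (Fin n) ℂ) : ℝ :=
  Real.sqrt (∑ j : Fin 2, ∫ ω,
    (((f ω * (f ω)ᴴ * e j ω + e j ω * (f ω)ᴴ * f ω) * a j ω).trace).re / 2 ∂μ)

namespace NAuxProof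

variable {n : ℕ}

/-- `traceNorm` as a sum of square roots of eigenvalues of `aᴴ a`. -/
lemma traceNorm_eq (a : Matrix (Fin n) (Fin n) ℂ) :
    traceNorm a = ∑ i, Real.sqrt ((Matrix.posSemidef_conjTranspose_mul_self a).1.eigenvalues i) := by
  rw [traceNorm, Matrix.trace_mul_comm, ← Matrix.mul_assoc,
    Unitary.coe_star_mul_self, Matrix.one_mul, Matrix.trace_diagonal, Complex.re_sum]
  simp

lemma traceNorm_nonneg (a : Matrix (Fin n) (Fin n) ℂ) : 0 ≤ traceNorm a := by
  rw [traceNorm_eq]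
  exact Finset.sum_nonneg fun i _ => Real.sqrt_nonneg _

/-- Trace as a sum of diagonal matrix coefficients in any eigenbasis-induced orthonormal family. -/
lemma trace_eq_sum_dot {A : Matrix (Fin n) (Fin n) ℂ} (hh : A.IsHermitian)
    (B : Matrix (Fin n) (Fin n) ℂ) :
    B.trace = ∑ i, dotProduct (star ⇑(hh.eigenvectorBasis i))
      (B *ᵥ ⇑(hh.eigenvectorBasis i)) := by
  have hUU : (hh.eigenvectorUnitary : Matrix (Fin n) (Fin n) ℂ) *
      star (hh.eigenvectorUnitary : Matrix (Fin n) (Fin n) ℂ) = 1 :=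
    Matrix.mem_unitaryGroup_iff.mp (hh.eigenvectorUnitary).2
  have hb : ∀ k l : Fin n, ∑ i, (⇑(hh.eigenvectorBasis i) k) * star (⇑(hh.eigenvectorBasis i) l)
      = (1 : Matrix (Fin n) (Fin n) ℂ) k l := by
    intro k l
    have := congrFun (congrFun hUU k) l
    simpa [Matrix.mul_apply, Matrix.star_apply, Matrix.IsHermitian.eigenvectorUnitary_apply]
      using this
  calc B.trace = ∑ l, ∑ k, B l k * (1 : Matrix (Fin n) (Fin n) ℂ) k l := by
        simp [Matrix.trace, Matrix.diag, ← Matrix.mul_apply]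
    _ = ∑ l, ∑ k, B l k * ∑ i, (⇑(hh.eigenvectorBasis i) k) * star (⇑(hh.eigenvectorBasis i) l) := by
        simp_rw [hb]
    _ = ∑ i, dotProduct (star ⇑(hh.eigenvectorBasis i)) (B *ᵥ ⇑(hh.eigenvectorBasis i)) := by
        simp only [dotProduct, Matrix.mulVec, Pi.star_apply, Finset.mul_sum]
        rw [show (∑ l, ∑ k, ∑ i, B l k *
            ((⇑(hh.eigenvectorBasis i) k) * star (⇑(hh.eigenvectorBasis i) l)))
          = ∑ l, ∑ i, ∑ k, B l k *
            ((⇑(hh.eigenvectorBasis i) k) * star (⇑(hh.eigenvectorBasis i) l)) from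
          Finset.sum_congr rfl fun l _ => Finset.sum_comm, Finset.sum_comm]
        congr 1; ext i
        congr 1; ext l
        congr 1; ext k
        ring

lemma dot_self_eig (a : Matrix (Fin n) (Fin n) ℂ) (i : Fin n) :
    dotProduct
        (star (a *ᵥ ⇑((Matrix.posSemidef_conjTranspose_mul_self a).1.eigenvectorBasis i)))
        (a *ᵥ ⇑((Matrix.posSemidef_conjTranspose_mul_self a).1.eigenvectorBasis i))
      = (((Matrix.posSemidef_conjTranspose_mul_self a).1.eigenvalues i : ℝ) : ℂ) := by
  set hh := (Matrix.posSemidef_conjTranspose_mul_self a).1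
  set v := ⇑(hh.eigenvectorBasis i) with hv
  rw [Matrix.star_mulVec, ← dotProduct_mulVec, Matrix.mulVec_mulVec,
    hh.mulVec_eigenvectorBasis]
  have hvv : dotProduct (star v) v = 1 := by
    rw [dotProduct_comm, hv, ← EuclideanSpace.inner_eq_star_dotProduct, inner_self_eq_norm_sq_to_K,
      hh.eigenvectorBasis.orthonormal.1 i]
    norm_num
  simp only [dotProduct, Pi.smul_apply, Pi.star_apply, Complex.real_smul]
  calc ∑ k, star (v k) * (↑(hh.eigenvalues i) * v k)
      = (↑(hh.eigenvalues i) : ℂ) * ∑ k, star (v k) * v k := by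
        rw [Finset.mul_sum]; congr 1; ext k; ring
    _ = _ := by rw [show (∑ k, star (v k) * v k) = dotProduct (star v) v from rfl, hvv,
          mul_one]

lemma norm_mulVec_eig (a : Matrix (Fin n) (Fin n) ℂ) (i : Fin n) :
    ‖(EuclideanSpace.equiv (Fin n) ℂ).symm
        (a *ᵥ ⇑((Matrix.posSemidef_conjTranspose_mul_self a).1.eigenvectorBasis i))‖
      = Real.sqrt ((Matrix.posSemidef_conjTranspose_mul_self a).1.eigenvalues i) := by
  set hh := (Matrix.posSemidef_conjTranspose_mul_self a).1
  set w := (EuclideanSpace.equiv (Fin n) ℂ).symm (a *ᵥ ⇑(hh.eigenvectorBasis i)) with hw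
  have h2 : ‖w‖ ^ 2 = hh.eigenvalues i := by
    rw [norm_sq_eq_re_inner (𝕜 := ℂ) w, EuclideanSpace.inner_eq_star_dotProduct]
    have : dotProduct (star ((WithLp.equiv 2 _) w)) ((WithLp.equiv 2 _) w)
        = ((hh.eigenvalues i : ℝ) : ℂ) := dot_self_eig a i
    rw [dotProduct_comm, show star w.ofLp ⬝ᵥ w.ofLp = ((hh.eigenvalues i : ℝ) : ℂ) from this]; exact Complex.ofReal_re _
  rw [← h2, Real.sqrt_sq (norm_nonneg w)]

/-- Trace-norm duality bound: `Re tr(m a) ≤ ‖m‖ ‖a‖₁`. -/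
lemma re_trace_mul_le (m a : Matrix (Fin n) (Fin n) ℂ) :
    ((m * a).trace).re ≤ ‖m‖ * traceNorm a := by
  set hh := (Matrix.posSemidef_conjTranspose_mul_self a).1
  rw [trace_eq_sum_dot hh (m * a), Complex.re_sum, traceNorm_eq, Finset.mul_sum]
  refine Finset.sum_le_sum fun i _ => ?_
  set v := hh.eigenvectorBasis i with hv
  set w := (EuclideanSpace.equiv (Fin n) ℂ).symm ((m * a) *ᵥ ⇑v) with hwdef
  have hinner : (inner ℂ v w) = dotProduct (star ⇑v) ((m * a) *ᵥ ⇑v) := by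
    rw [EuclideanSpace.inner_eq_star_dotProduct, dotProduct_comm]; rfl
  rw [← hinner]
  calc (inner ℂ v w).re ≤ ‖(inner ℂ v w)‖ := Complex.re_le_norm _
    _ ≤ ‖v‖ * ‖w‖ := norm_inner_le_norm (𝕜 := ℂ) v w
    _ = ‖w‖ := by rw [hh.eigenvectorBasis.orthonormal.1 i, one_mul]
    _ ≤ ‖m‖ * ‖(EuclideanSpace.equiv (Fin n) ℂ).symm (a *ᵥ ⇑v)‖ := by
        have : w = (EuclideanSpace.equiv (Fin n) ℂ).symm
            (m *ᵥ ((EuclideanSpace.equiv (Fin n) ℂ).symm (a *ᵥ ⇑v))) := by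
          rw [hwdef, ← Matrix.mulVec_mulVec]; rfl
        rw [this]
        exact Matrix.l2_opNorm_mulVec m _
    _ = ‖m‖ * Real.sqrt (hh.eigenvalues i) := by rw [norm_mulVec_eig a i]

lemma abs_re_trace_mul_le (m a : Matrix (Fin n) (Fin n) ℂ) :
    |((m * a).trace).re| ≤ ‖m‖ * traceNorm a := by
  rw [abs_le]
  constructor
  · have h := re_trace_mul_le (-m) a
    rw [Matrix.neg_mul, Matrix.trace_neg, Complex.neg_re, norm_neg] at h
    linarith
  · exact re_trace_mul_le m a

/-- `‖a‖₁ ≤ n ‖a‖`. -/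
lemma traceNorm_le (a : Matrix (Fin n) (Fin n) ℂ) : traceNorm a ≤ n * ‖a‖ := by
  rw [traceNorm_eq]
  have h : ∀ i, Real.sqrt ((Matrix.posSemidef_conjTranspose_mul_self a).1.eigenvalues i) ≤ ‖a‖ := by
    intro i
    set hh := (Matrix.posSemidef_conjTranspose_mul_self a).1
    rw [← norm_mulVec_eig a i]
    calc ‖(EuclideanSpace.equiv (Fin n) ℂ).symm (a *ᵥ ⇑(hh.eigenvectorBasis i))‖
        ≤ ‖a‖ * ‖hh.eigenvectorBasis i‖ := Matrix.l2_opNorm_mulVec a _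
      _ = ‖a‖ := by rw [hh.eigenvectorBasis.orthonormal.1 i, mul_one]
  calc ∑ i, Real.sqrt ((Matrix.posSemidef_conjTranspose_mul_self a).1.eigenvalues i)
      ≤ ∑ _i : Fin n, ‖a‖ := Finset.sum_le_sum fun i _ => h i
    _ = n * ‖a‖ := by simp [Finset.sum_const, nsmul_eq_mul]

lemma norm_one_le : ‖(1 : Matrix (Fin n) (Fin n) ℂ)‖ ≤ 1 := by
  have h := Matrix.l2_opNorm_conjTranspose_mul_self (1 : Matrix (Fin n) (Fin n) ℂ)
  rw [Matrix.conjTranspose_one, Matrix.one_mul] at h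
  nlinarith [norm_nonneg (1 : Matrix (Fin n) (Fin n) ℂ)]

lemma norm_tripotent_le {e : Matrix (Fin n) (Fin n) ℂ} (h : e * eᴴ * e = e) : ‖e‖ ≤ 1 := by
  have hp : (eᴴ * e) * (eᴴ * e) = eᴴ * e := by
    calc (eᴴ * e) * (eᴴ * e) = eᴴ * (e * eᴴ * e) := by
          simp only [Matrix.mul_assoc]
      _ = eᴴ * e := by rw [h]
  have h1 : ‖eᴴ * e‖ = ‖e‖ * ‖e‖ := Matrix.l2_opNorm_conjTranspose_mul_self e
  have h2 : ‖(eᴴ * e)ᴴ * (eᴴ * e)‖ = ‖eᴴ * e‖ * ‖eᴴ * e‖ :=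
    Matrix.l2_opNorm_conjTranspose_mul_self (eᴴ * e)
  have hherm : (eᴴ * e)ᴴ = eᴴ * e := by
    rw [Matrix.conjTranspose_mul, Matrix.conjTranspose_conjTranspose]
  rw [hherm, hp, h1] at h2
  have ht2 : ‖e‖ ^ 2 = ‖e‖ ^ 4 := by nlinarith [h2]
  have hle : ‖e‖ ^ 2 ≤ 1 := by nlinarith [sq_nonneg (‖e‖ ^ 2 - 1)]
  nlinarith [norm_nonneg e]

/-- The key pointwise estimate. -/
lemma key_le {e a f : Matrix (Fin n) (Fin n) ℂ}
    (htrip : e * eᴴ * e = e) (hf : ‖f‖ ≤ 1) :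
    (((f * fᴴ * e + e * fᴴ * f) * a).trace).re / 2 ≤ traceNorm a := by
  have he1 : ‖e‖ ≤ 1 := norm_tripotent_le htrip
  have hf' : ‖fᴴ‖ ≤ 1 := by rw [Matrix.l2_opNorm_conjTranspose]; exact hf
  have hb1 : ‖f * fᴴ * e‖ ≤ 1 := by
    calc ‖f * fᴴ * e‖ ≤ ‖f * fᴴ‖ * ‖e‖ := Matrix.l2_opNorm_mul _ _
      _ ≤ (‖f‖ * ‖fᴴ‖) * ‖e‖ := by
          apply mul_le_mul_of_nonneg_right (Matrix.l2_opNorm_mul _ _) (norm_nonneg _)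
      _ ≤ 1 := mul_le_one₀ (mul_le_one₀ hf (norm_nonneg _) hf') (norm_nonneg _) he1
  have hb2 : ‖e * fᴴ * f‖ ≤ 1 := by
    calc ‖e * fᴴ * f‖ ≤ ‖e * fᴴ‖ * ‖f‖ := Matrix.l2_opNorm_mul _ _
      _ ≤ (‖e‖ * ‖fᴴ‖) * ‖f‖ := by
          apply mul_le_mul_of_nonneg_right (Matrix.l2_opNorm_mul _ _) (norm_nonneg _)
      _ ≤ 1 := mul_le_one₀ (mul_le_one₀ he1 (norm_nonneg _) hf') (norm_nonneg _) hf
  have t1 : (((f * fᴴ * e) * a).trace).re ≤ traceNorm a := by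
    calc (((f * fᴴ * e) * a).trace).re ≤ ‖f * fᴴ * e‖ * traceNorm a := re_trace_mul_le _ _
      _ ≤ 1 * traceNorm a := mul_le_mul_of_nonneg_right hb1 (traceNorm_nonneg a)
      _ = traceNorm a := one_mul _
  have t2 : (((e * fᴴ * f) * a).trace).re ≤ traceNorm a := by
    calc (((e * fᴴ * f) * a).trace).re ≤ ‖e * fᴴ * f‖ * traceNorm a := re_trace_mul_le _ _
      _ ≤ 1 * traceNorm a := mul_le_mul_of_nonneg_right hb2 (traceNorm_nonneg a)
      _ = traceNorm a := one_mul _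
  rw [Matrix.add_mul, Matrix.trace_add, Complex.add_re]
  linarith

/-- The key pointwise absolute bound (for integrability). -/
lemma key_abs_le {e a f : Matrix (Fin n) (Fin n) ℂ}
    (htrip : e * eᴴ * e = e) (hf : ‖f‖ ≤ 1) :
    |(((f * fᴴ * e + e * fᴴ * f) * a).trace).re / 2| ≤ n * ‖a‖ := by
  have he1 : ‖e‖ ≤ 1 := norm_tripotent_le htrip
  have hf' : ‖fᴴ‖ ≤ 1 := by rw [Matrix.l2_opNorm_conjTranspose]; exact hf
  have hbig : ‖f * fᴴ * e + e * fᴴ * f‖ ≤ 2 := by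
    calc ‖f * fᴴ * e + e * fᴴ * f‖ ≤ ‖f * fᴴ * e‖ + ‖e * fᴴ * f‖ := norm_add_le _ _
      _ ≤ 2 := by
        have hb1 : ‖f * fᴴ * e‖ ≤ 1 := by
          calc ‖f * fᴴ * e‖ ≤ ‖f * fᴴ‖ * ‖e‖ := Matrix.l2_opNorm_mul _ _
            _ ≤ (‖f‖ * ‖fᴴ‖) * ‖e‖ := by
                apply mul_le_mul_of_nonneg_right (Matrix.l2_opNorm_mul _ _) (norm_nonneg _)
            _ ≤ 1 := mul_le_one₀ (mul_le_one₀ hf (norm_nonneg _) hf') (norm_nonneg _) he1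
        have hb2 : ‖e * fᴴ * f‖ ≤ 1 := by
          calc ‖e * fᴴ * f‖ ≤ ‖e * fᴴ‖ * ‖f‖ := Matrix.l2_opNorm_mul _ _
            _ ≤ (‖e‖ * ‖fᴴ‖) * ‖f‖ := by
                apply mul_le_mul_of_nonneg_right (Matrix.l2_opNorm_mul _ _) (norm_nonneg _)
            _ ≤ 1 := mul_le_one₀ (mul_le_one₀ he1 (norm_nonneg _) hf') (norm_nonneg _) hf
        linarith
  have h := abs_re_trace_mul_le (f * fᴴ * e + e * fᴴ * f) a
  have htn : traceNorm a ≤ n * ‖a‖ := traceNorm_le a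
  have htn0 : 0 ≤ traceNorm a := traceNorm_nonneg a
  rw [abs_div]
  have : |(((f * fᴴ * e + e * fᴴ * f) * a).trace).re| ≤ 2 * (n * ‖a‖) := by
    calc |(((f * fᴴ * e + e * fᴴ * f) * a).trace).re|
        ≤ ‖f * fᴴ * e + e * fᴴ * f‖ * traceNorm a := h
      _ ≤ 2 * traceNorm a := mul_le_mul_of_nonneg_right hbig htn0
      _ ≤ 2 * (n * ‖a‖) := by linarith
  rw [show |(2 : ℝ)| = 2 from abs_of_pos two_pos]
  linarith

lemma hct : Continuous (fun x : Matrix (Fin n) (Fin n) ℂ => xᴴ) :=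
  (Isometry.of_dist_eq fun x y => by
    rw [dist_eq_norm, dist_eq_norm, ← Matrix.conjTranspose_sub,
      Matrix.l2_opNorm_conjTranspose]).continuous

lemma htrace : Continuous (fun x : Matrix (Fin n) (Fin n) ℂ => x.trace) :=
  (Matrix.traceLinearMap (Fin n) ℂ ℂ).continuous_of_finiteDimensional

lemma hF : Continuous (fun p : Matrix (Fin n) (Fin n) ℂ × Matrix (Fin n) (Fin n) ℂ ×
      Matrix (Fin n) (Fin n) ℂ =>
    (((p.1 * p.1ᴴ * p.2.1 + p.2.1 * p.1ᴴ * p.1) * p.2.2).trace).re / 2) := by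
  have h1 : Continuous (fun p : Matrix (Fin n) (Fin n) ℂ × Matrix (Fin n) (Fin n) ℂ ×
      Matrix (Fin n) (Fin n) ℂ => p.1) := continuous_fst
  have h2 : Continuous (fun p : Matrix (Fin n) (Fin n) ℂ × Matrix (Fin n) (Fin n) ℂ ×
      Matrix (Fin n) (Fin n) ℂ => p.2.1) := continuous_snd.fst
  have h3 : Continuous (fun p : Matrix (Fin n) (Fin n) ℂ × Matrix (Fin n) (Fin n) ℂ ×
      Matrix (Fin n) (Fin n) ℂ => p.2.2) := continuous_snd.snd
  exact (Complex.continuous_re.comp (htrace.comp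
    ((((h1.mul (hct.comp h1)).mul h2).add ((h2.mul (hct.comp h1)).mul h1)).mul h3))).div_const 2

end NAuxProof

/-- Norm-attainment of the seminorms `‖·‖_{g₁,g₂}` on the closed unit ball of
`L^∞(μ, M_n(ℂ))`: the supremum of `N(f)` over all measurable `f` with `‖f(ω)‖ ≤ 1`
(ℓ²-operator norm) almost everywhere is attained. -/
theorem Nseminorm_attains_sup {Ω : Type*} [MeasurableSpace Ω]
    (μ : Measure Ω) [IsProbabilityMeasure μ] (n : ℕ) (hn : 0 < n)
    (a e : Fin 2 → Ω → Matrix (Fin n) (Fin n) ℂ)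
    (ha : ∀ j, Integrable (a j) μ)
    (he : ∀ j, Measurable (e j))
    (hae : ∀ j, ∀ᵐ ω ∂μ,
      e j ω * (e j ω)ᴴ * e j ω = e j ω ∧
      ((e j ω * a j ω).trace).re = traceNorm (a j ω)) :
    ∃ f₀ : Ω → Matrix (Fin n) (Fin n) ℂ,
      Measurable f₀ ∧ (∀ᵐ ω ∂μ, ‖f₀ ω‖ ≤ 1) ∧
      ∀ f : Ω → Matrix (Fin n) (Fin n) ℂ, Measurable f → (∀ᵐ ω ∂μ, ‖f ω‖ ≤ 1) →
        Nseminorm μ a e f ≤ Nseminorm μ a e f₀ := by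
  classical
  refine ⟨fun _ => (1 : Matrix (Fin n) (Fin n) ℂ), measurable_const,
    Filter.Eventually.of_forall fun ω => NAuxProof.norm_one_le, ?_⟩
  intro f hfmeas hfbd
  -- common facts
  have hint : ∀ (g : Ω → Matrix (Fin n) (Fin n) ℂ), Measurable g → (∀ᵐ ω ∂μ, ‖g ω‖ ≤ 1) →
      ∀ j, Integrable (fun ω =>
        (((g ω * (g ω)ᴴ * e j ω + e j ω * (g ω)ᴴ * g ω) * a j ω).trace).re / 2) μ := by
    intro g hg hgbd j
    haveI : OpensMeasurableSpace (Matrix (Fin n) (Fin n) ℂ × Matrix (Fin n) (Fin n) ℂ ×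
        Matrix (Fin n) (Fin n) ℂ) := Prod.opensMeasurableSpace
    have haem : AEMeasurable (a j) μ := (ha j).aemeasurable
    have hprod : AEMeasurable (fun ω => (g ω, e j ω, a j ω)) μ :=
      hg.aemeasurable.prodMk ((he j).aemeasurable.prodMk haem)
    have hmeas : AEStronglyMeasurable (fun ω =>
        (((g ω * (g ω)ᴴ * e j ω + e j ω * (g ω)ᴴ * g ω) * a j ω).trace).re / 2) μ :=
      (NAuxProof.hF.measurable.comp_aemeasurable hprod).aestronglyMeasurable
    refine Integrable.mono' (((ha j).norm.const_mul (n : ℝ))) hmeas ?_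
    filter_upwards [hgbd, hae j] with ω hω hωe
    rw [Real.norm_eq_abs]
    exact NAuxProof.key_abs_le hωe.1 hω
  -- pointwise comparison
  refine Real.sqrt_le_sqrt (Finset.sum_le_sum fun j _ => ?_)
  refine integral_mono_ae (hint f hfmeas hfbd j)
    (hint (fun _ => 1) measurable_const
      (Filter.Eventually.of_forall fun ω => NAuxProof.norm_one_le) j) ?_
  filter_upwards [hfbd, hae j] with ω hω hωe
  have h1 : (((f ω * (f ω)ᴴ * e j ω + e j ω * (f ω)ᴴ * f ω) * a j ω).trace).re / 2
      ≤ traceNorm (a j ω) := NAuxProof.key_le hωe.1 hω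
  have h2 : ((((1 : Matrix (Fin n) (Fin n) ℂ) * (1 : Matrix (Fin n) (Fin n) ℂ)ᴴ * e j ω
      + e j ω * (1 : Matrix (Fin n) (Fin n) ℂ)ᴴ * (1 : Matrix (Fin n) (Fin n) ℂ)) * a j ω).trace).re / 2
      = traceNorm (a j ω) := by
    rw [Matrix.conjTranspose_one, Matrix.one_mul, Matrix.one_mul, Matrix.mul_one,
      Matrix.add_mul, Matrix.trace_add, Complex.add_re, ← hωe.2]
    rw [Matrix.mul_one]
    ring
  calc (((f ω * (f ω)ᴴ * e j ω + e j ω * (f ω)ᴴ * f ω) * a j ω).trace).re / 2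
      ≤ traceNorm (a j ω) := h1
    _ = _ := h2.symm
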